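/- The number of S-Motzkin paths of length 3n (i.e., Motzkin paths with n up steps, n down steps, and n horizontal steps such that deleting all down steps yields the word (hu)^n) equals (1/(2n+1)) * C(3n, n). -/

import Mathlib

inductive Step : Type
  | u : Step
  | d : Step
  | h : Step
deriving DecidableEq, Repr

def stepVal : Step → ℤ
  | Step.u => 1
  | Step.d => -1
  | Step.h => 0

/-- Sum of step values (final height) of a word. -/
def hsum (w : List Step) : ℤ := (w.map stepVal).sum

/-- All prefixes have nonnegative height. -/
def NonnegPrefixes (w : List Step) : Prop := ∀ p : List Step, p <+: w → 0 ≤ hsum p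

/-- A Motzkin path: nonnegative prefix heights and total height 0. -/
def IsMotzkin (w : List Step) : Prop := NonnegPrefixes w ∧ hsum w = 0

/-- The word (hu)^n. -/
def huWord (n : ℕ) : List Step := (List.replicate n [Step.h, Step.u]).flatten

/-- An S-Motzkin path with n up, n down, n horizontal steps:
a Motzkin path whose subword of non-down steps is (hu)^n. -/
def IsSMotzkin (n : ℕ) (w : List Step) : Prop :=
  IsMotzkin w ∧ w.count Step.u = n ∧ w.count Step.d = n ∧ w.count Step.h = n ∧
    w.filter (fun s => s ≠ Step.d) = huWord n

/-- A nonempty word over {h, u}. -/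
def HUBlock (A : List Step) : Prop := A ≠ [] ∧ ∀ s ∈ A, s = Step.h ∨ s = Step.u

/-- Glue blocks A_i with runs of d_i down steps: A_0 d^{d_1} A_1 d^{d_2} ... -/
def joinAM (As : List (List Step)) (ds : List ℕ) : List Step :=
  (List.zipWith (fun A k => A ++ List.replicate k Step.d) As ds).flatten

/-- w decomposes as A_0 D_1 A_1 D_2 ... A_{t-1} D_t with A_i nonempty over {h,u}
and D_i nonempty runs of down steps. -/
def AMDecomp (w : List Step) (As : List (List Step)) (ds : List ℕ) : Prop :=
  As.length = ds.length ∧ (∀ A ∈ As, HUBlock A) ∧ (∀ k ∈ ds, 0 < k) ∧ w = joinAM As ds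

/-- An Asinowski–Mansour path with n up, n down, n horizontal steps. -/
def IsAM (n : ℕ) (w : List Step) : Prop :=
  IsMotzkin w ∧ w.count Step.u = n ∧ w.count Step.d = n ∧ w.count Step.h = n ∧
    ∃ As ds, AMDecomp w As ds

/-- A Dyck path with n up and n down steps, encoded over the alphabet Step. -/
def IsDyck (n : ℕ) (w : List Step) : Prop :=
  (∀ s ∈ w, s = Step.u ∨ s = Step.d) ∧ w.count Step.u = n ∧ w.count Step.d = n ∧
    NonnegPrefixes w

/-- Height of the path at the start of step i. -/
def heightAt (w : List Step) (i : ℕ) : ℤ := hsum (w.take i)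

/-- Two horizontal steps at positions i < j, at the same height, with all steps
strictly between them at or above that height. -/
def Matched (w : List Step) (i j : ℕ) : Prop :=
  i < j ∧ w[i]? = some Step.h ∧ w[j]? = some Step.h ∧
    heightAt w i = heightAt w j ∧ ∀ k, i < k → k < j → heightAt w i ≤ heightAt w k

/-- Positions of the horizontal steps of w, from left to right. -/
def hPositions (w : List Step) : List ℕ := List.findIdxs (fun s => s = Step.h) w

/-- Lexicographic (weak) order on lists of naturals. -/
def LexLe (l l' : List ℕ) : Prop := l = l' ∨ List.Lex (· < ·) l l'

/-- w is an S-Motzkin word obtained by inserting horizontal steps into D. -/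
def ValidIns (D w : List Step) : Prop :=
  (∃ m, IsSMotzkin m w) ∧ w.filter (fun s => s ≠ Step.h) = D

/-- w is the greedy h-insertion into D: each h leftmost, i.e. the list of positions
of the h's is lexicographically minimal among all valid insertions. -/
def GreedyFor (D w : List Step) : Prop :=
  ValidIns D w ∧ ∀ w', ValidIns D w' → LexLe (hPositions w) (hPositions w')

namespace SMAux

def enc : Step → Bool
  | Step.d => false
  | _ => true

@[simp] lemma enc_d : enc Step.d = false := rfl
@[simp] lemma enc_u : enc Step.u = true := rfl
@[simp] lemma enc_h : enc Step.h = true := rfl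

lemma enc_false_iff (s : Step) : enc s = false ↔ s = Step.d := by cases s <;> simp [enc]

def val2 : Bool → ℤ
  | true => 1
  | false => -2

def tsum (v : List Bool) : ℤ := (v.map val2).sum

@[simp] lemma tsum_nil : tsum [] = 0 := rfl
@[simp] lemma tsum_cons (b : Bool) (v : List Bool) : tsum (b :: v) = val2 b + tsum v := by
  simp [tsum]
@[simp] lemma tsum_append (v w : List Bool) : tsum (v ++ w) = tsum v + tsum w := by
  simp [tsum]

lemma tsum_eq_counts (v : List Bool) :
    tsum v = (v.count true : ℤ) - 2 * (v.count false : ℤ) := by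
  induction v with
  | nil => simp
  | cons b t ih => cases b <;> simp [List.count_cons, ih, val2] <;> push_cast <;> ring

lemma count_true_add_count_false (v : List Bool) : v.count true + v.count false = v.length := by
  induction v with
  | nil => rfl
  | cons b t ih => cases b <;> simp [List.count_cons] <;> omega

@[simp] lemma hsum_nil : hsum [] = 0 := rfl
@[simp] lemma hsum_cons (s : Step) (w : List Step) : hsum (s :: w) = stepVal s + hsum w := by
  simp [hsum]

lemma hsum_eq_counts (w : List Step) :
    hsum w = (w.count Step.u : ℤ) - (w.count Step.d : ℤ) := by
  induction w with
  | nil => simp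
  | cons s t ih => cases s <;> simp [List.count_cons, ih, stepVal] <;> push_cast <;> ring

lemma count_true_map_enc (w : List Step) :
    (w.map enc).count true = w.count Step.u + w.count Step.h := by
  induction w with
  | nil => rfl
  | cons s t ih => cases s <;> simp [List.count_cons, ih] <;> omega

lemma count_false_map_enc (w : List Step) :
    (w.map enc).count false = w.count Step.d := by
  induction w with
  | nil => rfl
  | cons s t ih => cases s <;> simp [List.count_cons, ih]

lemma huWord_succ (n : ℕ) : huWord (n+1) = Step.h :: Step.u :: huWord n := by
  simp [huWord, List.replicate_succ]

@[simp] lemma huWord_zero : huWord 0 = [] := rfl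

@[simp] lemma count_u_huWord (n : ℕ) : (huWord n).count Step.u = n := by
  induction n with
  | zero => rfl
  | succ n ih => simp [huWord_succ, List.count_cons, ih]

@[simp] lemma count_h_huWord (n : ℕ) : (huWord n).count Step.h = n := by
  induction n with
  | zero => rfl
  | succ n ih => simp [huWord_succ, List.count_cons, ih]

@[simp] lemma count_d_huWord (n : ℕ) : (huWord n).count Step.d = 0 := by
  induction n with
  | zero => rfl
  | succ n ih => simp [huWord_succ, List.count_cons, ih]

lemma length_huWord (n : ℕ) : (huWord n).length = 2 * n := by
  induction n with
  | zero => rfl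
  | succ n ih => simp [huWord_succ, ih]; omega

lemma mem_huWord_enc {n : ℕ} {x : Step} (hx : x ∈ huWord n) : enc x = true := by
  induction n with
  | zero => simp at hx
  | succ n ih =>
    rw [huWord_succ] at hx
    simp only [List.mem_cons] at hx
    rcases hx with rfl | rfl | h
    · rfl
    · rfl
    · exact ih h

lemma prefix_cons_elim {α : Type*} {q : List α} {a : α} {t : List α} (h : q <+: a :: t) :
    q = [] ∨ ∃ q', q = a :: q' ∧ q' <+: t := by
  cases q with
  | nil => exact Or.inl rfl
  | cons x q' =>
    rw [List.cons_prefix_cons] at h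
    exact Or.inr ⟨q', by rw [h.1], h.2⟩

lemma huWord_prefix_counts {n : ℕ} {q : List Step} (hq : q <+: huWord n) :
    q.count Step.u ≤ q.count Step.h ∧ q.count Step.h ≤ q.count Step.u + 1 := by
  induction n generalizing q with
  | zero =>
    simp only [huWord_zero, List.prefix_nil] at hq
    subst hq; simp
  | succ n ih =>
    rw [huWord_succ] at hq
    rcases prefix_cons_elim hq with rfl | ⟨q₁, rfl, hq₁⟩
    · simp
    · rcases prefix_cons_elim hq₁ with rfl | ⟨q₂, rfl, hq₂⟩
      · simp
      · have := ih hq₂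
        simp only [List.count_cons, beq_iff_eq, reduceCtorEq, if_false, if_true, reduceIte]
        omega

end SMAux
namespace SMAux

def Ternary (n : ℕ) (v : List Bool) : Prop :=
  v.count true = 2*n ∧ v.count false = n ∧ ∀ p, p <+: v → 0 ≤ tsum p

def GoodT (n : ℕ) (v : List Bool) : Prop :=
  v.count true = 2*n+1 ∧ v.count false = n ∧ ∀ p, p <+: v → p ≠ [] → 1 ≤ tsum p

lemma filter_ne_d_eq (w : List Step) :
    w.filter (fun s => s ≠ Step.d) = w.filter (fun s => enc s) := by
  apply List.filter_congr
  intro x _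
  cases x <;> rfl

lemma eq_of_enc_eq_of_filter_eq :
    ∀ {w w' : List Step}, w.map enc = w'.map enc →
      w.filter (fun s => enc s) = w'.filter (fun s => enc s) → w = w' := by
  intro w
  induction w with
  | nil =>
    intro w' hm _
    cases w' with
    | nil => rfl
    | cons a t => simp at hm
  | cons a t ih =>
    intro w' hm hf
    cases w' with
    | nil => simp at hm
    | cons a' t' =>
      simp only [List.map_cons, List.cons.injEq] at hm
      obtain ⟨h1, h2⟩ := hm
      by_cases hA : enc a = true
      · have hA' : enc a' = true := by rw [← h1]; exact hA
        rw [List.filter_cons_of_pos hA, List.filter_cons_of_pos hA'] at hf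
        simp only [List.cons.injEq] at hf
        rw [hf.1, ih h2 hf.2]
      · have hA2 : enc a = false := by simpa using hA
        have hA' : enc a' = false := by rw [← h1]; exact hA2
        rw [List.filter_cons_of_neg (by simp [hA2]), List.filter_cons_of_neg (by simp [hA'])] at hf
        rw [(enc_false_iff a).mp hA2, (enc_false_iff a').mp hA', ih h2 hf]

def decode : List Bool → List Step → List Step
  | [], _ => []
  | false :: v, xs => Step.d :: decode v xs
  | true :: v, x :: xs => x :: decode v xs
  | true :: _, [] => []

lemma decode_map_enc : ∀ (v : List Bool) (xs : List Step),
    v.count true ≤ xs.length → (∀ x ∈ xs, enc x = true) →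
    (decode v xs).map enc = v := by
  intro v
  induction v with
  | nil => intro xs _ _; rfl
  | cons b t ih =>
    intro xs hc hx
    cases b with
    | false =>
      simp only [decode, List.map_cons, enc_d]
      rw [ih xs (by simpa [List.count_cons] using hc) hx]
    | true =>
      cases xs with
      | nil => simp [List.count_cons] at hc
      | cons x xs' =>
        simp only [decode, List.map_cons]
        rw [hx x (by simp), ih xs' (by simp [List.count_cons] at hc; omega)
          (fun y hy => hx y (by simp [hy]))]

lemma decode_filter : ∀ (v : List Bool) (xs : List Step),
    v.count true = xs.length → (∀ x ∈ xs, enc x = true) →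
    (decode v xs).filter (fun s => enc s) = xs := by
  intro v
  induction v with
  | nil =>
    intro xs hc _
    have : xs = [] := by
      cases xs with
      | nil => rfl
      | cons a t => simp at hc
    rw [this]; rfl
  | cons b t ih =>
    intro xs hc hx
    cases b with
    | false =>
      simp only [decode]
      rw [List.filter_cons_of_neg (by simp)]
      exact ih xs (by simpa [List.count_cons] using hc) hx
    | true =>
      cases xs with
      | nil => simp [List.count_cons] at hc
      | cons x xs' =>
        simp only [decode]
        rw [List.filter_cons_of_pos (hx x (by simp))]
        rw [ih xs' (by simp [List.count_cons] at hc; omega) (fun y hy => hx y (by simp [hy]))]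

lemma smotzkin_to_ternary {n : ℕ} {w : List Step} (h : IsSMotzkin n w) :
    Ternary n (w.map enc) := by
  obtain ⟨⟨hnn, _⟩, hu, hd, hh, hfil⟩ := h
  refine ⟨?_, ?_, ?_⟩
  · rw [count_true_map_enc, hu, hh]; ring
  · rw [count_false_map_enc, hd]
  · intro p hp
    set q := w.take p.length with hq
    have hpq : p = q.map enc := by
      rw [List.prefix_iff_eq_take.mp hp, hq, List.map_take]
    have hqw : q <+: w := List.take_prefix _ _
    have hfq : q.filter (fun s => enc s) <+: huWord n := by
      rw [← hfil, filter_ne_d_eq]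
      exact List.IsPrefix.filter _ hqw
    have hcnt := huWord_prefix_counts hfq
    have hcu : (q.filter (fun s => enc s)).count Step.u = q.count Step.u :=
      List.count_filter (by rfl)
    have hch : (q.filter (fun s => enc s)).count Step.h = q.count Step.h :=
      List.count_filter (by rfl)
    rw [hcu, hch] at hcnt
    have hns : 0 ≤ hsum q := hnn q hqw
    rw [hsum_eq_counts] at hns
    rw [hpq, tsum_eq_counts, count_true_map_enc, count_false_map_enc]
    have := hcnt.1
    push_cast at *
    omega

lemma ternary_to_smotzkin {n : ℕ} {v : List Bool} (h : Ternary n v) :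
    IsSMotzkin n (decode v (huWord n)) ∧ (decode v (huWord n)).map enc = v := by
  obtain ⟨hct, hcf, hpre⟩ := h
  have hlen : v.count true = (huWord n).length := by rw [hct, length_huWord]
  have hmem : ∀ x ∈ huWord n, enc x = true := fun x hx => mem_huWord_enc hx
  set w := decode v (huWord n) with hw
  have hmap : w.map enc = v := decode_map_enc v _ (le_of_eq hlen) hmem
  have hfil : w.filter (fun s => enc s) = huWord n := decode_filter v _ hlen hmem
  have hfil' : w.filter (fun s => s ≠ Step.d) = huWord n := by rw [filter_ne_d_eq]; exact hfil
  have hcd : w.count Step.d = n := by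
    rw [← count_false_map_enc, hmap, hcf]
  have hcu : w.count Step.u = n := by
    have : (w.filter (fun s => enc s)).count Step.u = w.count Step.u :=
      List.count_filter (by rfl)
    rw [hfil] at this; rw [← this, count_u_huWord]
  have hch : w.count Step.h = n := by
    have : (w.filter (fun s => enc s)).count Step.h = w.count Step.h :=
      List.count_filter (by rfl)
    rw [hfil] at this; rw [← this, count_h_huWord]
  have hnn : NonnegPrefixes w := by
    intro p hp
    have hmp : p.map enc <+: v := by rw [← hmap]; exact List.IsPrefix.map _ hp
    have ht := hpre _ hmp
    rw [tsum_eq_counts, count_true_map_enc, count_false_map_enc] at ht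
    have hfp : p.filter (fun s => enc s) <+: huWord n := by
      rw [← hfil]; exact List.IsPrefix.filter _ hp
    have hcnt := huWord_prefix_counts hfp
    have hcu' : (p.filter (fun s => enc s)).count Step.u = p.count Step.u :=
      List.count_filter (by rfl)
    have hch' : (p.filter (fun s => enc s)).count Step.h = p.count Step.h :=
      List.count_filter (by rfl)
    rw [hcu', hch'] at hcnt
    rw [hsum_eq_counts]
    have := hcnt.2
    push_cast at *
    omega
  exact ⟨⟨⟨hnn, by rw [hsum_eq_counts, hcu, hcd]; ring⟩, hcu, hcd, hch, hfil'⟩, hmap⟩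

lemma card_smotzkin_eq_ternary (n : ℕ) :
    Nat.card {w : List Step // IsSMotzkin n w} = Nat.card {v : List Bool // Ternary n v} := by
  apply Nat.card_eq_of_bijective (fun w => ⟨w.1.map enc, smotzkin_to_ternary w.2⟩)
  constructor
  · rintro ⟨w, hw⟩ ⟨w', hw'⟩ hh
    simp only [Subtype.mk.injEq] at hh ⊢
    apply eq_of_enc_eq_of_filter_eq hh
    rw [← filter_ne_d_eq, ← filter_ne_d_eq, hw.2.2.2.2, hw'.2.2.2.2]
  · rintro ⟨v, hv⟩
    obtain ⟨hsm, hmap⟩ := ternary_to_smotzkin hv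
    exact ⟨⟨decode v (huWord n), hsm⟩, by simp only [Subtype.mk.injEq]; exact hmap⟩

end SMAux
namespace SMAux

lemma goodT_length {n : ℕ} {v : List Bool} (h : v.count true = 2*n+1 ∧ v.count false = n) :
    v.length = 3*n+1 := by
  have := count_true_add_count_false v
  omega

lemma ternary_cons_good {n : ℕ} {v : List Bool} (h : Ternary n v) : GoodT n (true :: v) := by
  obtain ⟨hct, hcf, hpre⟩ := h
  refine ⟨by simp [List.count_cons, hct], by simp [List.count_cons, hcf], ?_⟩
  intro p hp hne
  rcases prefix_cons_elim hp with rfl | ⟨p', rfl, hp'⟩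
  · exact absurd rfl hne
  · have := hpre p' hp'
    simp only [tsum_cons, val2]
    omega

lemma card_ternary_eq_good (n : ℕ) :
    Nat.card {v : List Bool // Ternary n v} = Nat.card {g : List Bool // GoodT n g} := by
  apply Nat.card_eq_of_bijective (fun v => ⟨true :: v.1, ternary_cons_good v.2⟩)
  constructor
  · rintro ⟨v, hv⟩ ⟨v', hv'⟩ hh
    simp only [Subtype.mk.injEq, List.cons.injEq, true_and] at hh
    exact Subtype.ext hh
  · rintro ⟨g, hg⟩
    obtain ⟨hct, hcf, hpre⟩ := hg
    have hne : g ≠ [] := by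
      intro h; rw [h] at hct; simp at hct
    obtain ⟨x, t, rfl⟩ := List.exists_cons_of_ne_nil hne
    have hx : x = true := by
      have h1 := hpre [x] ⟨t, rfl⟩ (by simp)
      cases x
      · exfalso; norm_num [tsum, val2] at h1
      · rfl
    subst hx
    refine ⟨⟨t, ?_, ?_, ?_⟩, rfl⟩
    · simpa [List.count_cons] using hct
    · simpa [List.count_cons] using hcf
    · intro p hp
      have := hpre (true :: p) (by rw [List.cons_prefix_cons]; exact ⟨rfl, hp⟩) (by simp)
      simp only [tsum_cons, val2] at this
      omega

lemma tsum_take_add_drop (l : List Bool) (m : ℕ) :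
    tsum (l.take m) + tsum (l.drop m) = tsum l := by
  rw [← tsum_append, List.take_append_drop]

lemma tsum_take_rotate_low (l : List Bool) (m k : ℕ) (hm : m ≤ l.length)
    (hk : k ≤ l.length - m) :
    tsum ((l.rotate m).take k) = tsum (l.take (m+k)) - tsum (l.take m) := by
  rw [List.rotate_eq_drop_append_take hm, List.take_append]
  have h1 : k - (l.drop m).length = 0 := by simp; omega
  rw [h1, List.take_zero, List.append_nil]
  have h2 : (l.take k).length = k := by simp; omega
  have h3 : (l.take (m+k)).drop m = (l.drop m).take k := by
    rw [List.drop_take]; congr 1; omega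
  rw [← h3]
  have h4 := tsum_take_add_drop (l.take (m+k)) m
  rw [List.take_take, min_eq_left (by omega)] at h4
  omega

lemma tsum_take_rotate_high (l : List Bool) (m k : ℕ) (hm : m ≤ l.length)
    (hk1 : l.length - m ≤ k) (hk2 : k ≤ l.length) :
    tsum ((l.rotate m).take k) =
      tsum l - tsum (l.take m) + tsum (l.take (k - (l.length - m))) := by
  rw [List.rotate_eq_drop_append_take hm, List.take_append]
  rw [List.take_of_length_le (by simp; omega)]
  have h5 : (l.drop m).length = l.length - m := by simp
  rw [h5]
  rw [List.take_take, min_eq_left (by omega)]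
  rw [tsum_append]
  have h4 := tsum_take_add_drop l m
  omega

lemma goodT_iff_take {n : ℕ} {v : List Bool} :
    GoodT n v ↔ (v.count true = 2*n+1 ∧ v.count false = n ∧
      ∀ k, 0 < k → k ≤ v.length → 1 ≤ tsum (v.take k)) := by
  constructor
  · rintro ⟨h1, h2, h3⟩
    refine ⟨h1, h2, fun k hk hkl => h3 _ (List.take_prefix _ _) ?_⟩
    intro hcon
    have := congrArg List.length hcon
    simp only [List.length_take, List.length_nil] at this
    omega
  · rintro ⟨h1, h2, h3⟩
    refine ⟨h1, h2, fun p hp hne => ?_⟩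
    have hple := hp.length_le
    have hpl : 0 < p.length := List.length_pos_iff.mpr hne
    have := h3 p.length hpl hple
    rwa [← List.prefix_iff_eq_take.mp hp] at this

lemma wd_tsum {n : ℕ} {v : List Bool} (h1 : v.count true = 2*n+1) (h2 : v.count false = n) :
    tsum v = 1 := by
  rw [tsum_eq_counts, h1, h2]
  push_cast
  ring

lemma exists_good_rotate {n : ℕ} (v : List Bool)
    (h1 : v.count true = 2*n+1) (h2 : v.count false = n) :
    ∃ j < v.length, GoodT n (v.rotate j) := by
  have hL : v.length = 3*n+1 := goodT_length ⟨h1, h2⟩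
  have hLpos : 0 < v.length := by omega
  set S : ℕ → ℤ := fun k => tsum (v.take k) with hS
  have hS0 : S 0 = 0 := by simp [hS]
  have hSL : S v.length = 1 := by
    simp only [hS, List.take_of_length_le (le_refl _)]
    exact wd_tsum h1 h2
  -- minimum of S over range (v.length)
  have hne : ((Finset.range v.length).image S).Nonempty := by
    refine ⟨S 0, Finset.mem_image.mpr ⟨0, Finset.mem_range.mpr hLpos, rfl⟩⟩
  set M := ((Finset.range v.length).image S).min' hne with hM
  have hmin : ∀ i < v.length, M ≤ S i := fun i hi =>
    Finset.min'_le _ _ (Finset.mem_image.mpr ⟨i, Finset.mem_range.mpr hi, rfl⟩)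
  have hMmem : ∃ i < v.length, S i = M := by
    obtain ⟨i, hi, hSi⟩ := Finset.mem_image.mp (Finset.min'_mem _ hne)
    exact ⟨i, Finset.mem_range.mp hi, hSi⟩
  have hTne : ((Finset.range v.length).filter (fun i => S i = M)).Nonempty := by
    obtain ⟨i, hi, hSi⟩ := hMmem
    exact ⟨i, Finset.mem_filter.mpr ⟨Finset.mem_range.mpr hi, hSi⟩⟩
  set j := ((Finset.range v.length).filter (fun i => S i = M)).max' hTne with hj
  have hjmem := Finset.max'_mem _ hTne
  rw [← hj, Finset.mem_filter, Finset.mem_range] at hjmem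
  obtain ⟨hjL, hSj⟩ := hjmem
  have hlast : ∀ i, j < i → i < v.length → S j < S i := by
    intro i hji hiL
    have hle : M ≤ S i := hmin i hiL
    rcases eq_or_lt_of_le hle with h | h
    · exfalso
      have h7 := Finset.le_max' ((Finset.range v.length).filter (fun i => S i = M)) i
        (Finset.mem_filter.mpr ⟨Finset.mem_range.mpr hiL, h.symm⟩)
      rw [← hj] at h7
      omega
    · rw [hSj]; exact h
  have hM0 : M ≤ 0 := by rw [← hS0]; exact hmin 0 hLpos
  refine ⟨j, hjL, ?_⟩
  rw [goodT_iff_take]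
  have hperm := List.rotate_perm v j
  refine ⟨by rw [hperm.count_eq, h1], by rw [hperm.count_eq, h2], ?_⟩
  intro k hk hkl
  rw [List.length_rotate] at hkl
  by_cases hcase : k ≤ v.length - j
  · rw [tsum_take_rotate_low v j k (le_of_lt hjL) hcase]
    change 1 ≤ S (j + k) - S j
    rcases lt_or_eq_of_le (show j + k ≤ v.length by omega) with h | h
    · have h5 := hlast (j+k) (by omega) h
      omega
    · have h6 : S (j + k) = 1 := by rw [h]; exact hSL
      rw [hSj]
      omega
  · rw [tsum_take_rotate_high v j k (le_of_lt hjL) (by omega) hkl]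
    have hk' : k - (v.length - j) < v.length := by omega
    have := hmin _ hk'
    have htv : tsum v = 1 := wd_tsum h1 h2
    change 1 ≤ tsum v - S j + S (k - (v.length - j))
    rw [hSj]
    omega

lemma not_good_rotate {n : ℕ} {v : List Bool} (hv : GoodT n v) {m : ℕ} (h0 : 0 < m)
    (hm : m < v.length) : ¬ GoodT n (v.rotate m) := by
  intro hg
  obtain ⟨h1, h2, h3⟩ := hv
  rw [goodT_iff_take] at hg
  have hk := hg.2.2 (v.length - m) (by omega) (by rw [List.length_rotate]; omega)
  rw [tsum_take_rotate_low v m (v.length - m) (le_of_lt hm) (le_refl _)] at hk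
  rw [show m + (v.length - m) = v.length by omega, List.take_of_length_le (le_refl _)] at hk
  have htv : tsum v = 1 := wd_tsum h1 h2
  have hSm : 1 ≤ tsum (v.take m) := by
    apply h3 _ (List.take_prefix _ _)
    intro hcon
    have := congrArg List.length hcon
    simp only [List.length_take, List.length_nil] at this
    omega
  omega

end SMAux
namespace SMAux

instance finite_count_pair (a b : ℕ) :
    Finite {v : List Bool // v.count true = a ∧ v.count false = b} := by
  have hsub : {v : List Bool | v.count true = a ∧ v.count false = b} ⊆
      {l : List Bool | l.length = a + b} := by
    intro v hv
    have := count_true_add_count_false v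
    simp only [Set.mem_setOf_eq] at hv ⊢
    omega
  exact ((List.finite_length_eq Bool (a+b)).subset hsub).to_subtype

instance finite_goodT (n : ℕ) : Finite {v : List Bool // GoodT n v} := by
  have hsub : {v : List Bool | GoodT n v} ⊆ {l : List Bool | l.length = 3*n+1} := by
    intro v hv
    exact goodT_length ⟨hv.1, hv.2.1⟩
  exact ((List.finite_length_eq Bool (3*n+1)).subset hsub).to_subtype

lemma card_count_pair : ∀ a b : ℕ,
    Nat.card {v : List Bool // v.count true = a ∧ v.count false = b} = (a+b).choose b := by
  have key : ∀ (a b : ℕ), (∀ v : List Bool,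
      (v.count true = 0 ∧ v.count false = b) ↔ v = List.replicate b false) ∧
      (∀ v : List Bool, (v.count true = a ∧ v.count false = 0) ↔ v = List.replicate a true) := by
    intro a b
    constructor
    · intro v
      constructor
      · rintro ⟨h1, h2⟩
        have hall : ∀ x ∈ v, x = false := by
          intro x hx
          cases x
          · rfl
          · exact absurd hx (List.count_eq_zero.mp h1)
        have hlen : v.length = b := by
          have := count_true_add_count_false v
          omega
        exact List.eq_replicate_iff.mpr ⟨hlen, hall⟩
      · rintro rfl
        constructor <;> simp [List.count_replicate]
    · intro v
      constructor
      · rintro ⟨h1, h2⟩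
        have hall : ∀ x ∈ v, x = true := by
          intro x hx
          cases x
          · exact absurd hx (List.count_eq_zero.mp h2)
          · rfl
        have hlen : v.length = a := by
          have := count_true_add_count_false v
          omega
        exact List.eq_replicate_iff.mpr ⟨hlen, hall⟩
      · rintro rfl
        constructor <;> simp [List.count_replicate]
  have singl : ∀ (P : List Bool → Prop) (w : List Bool), (∀ v, P v ↔ v = w) →
      Nat.card {v : List Bool // P v} = 1 := by
    intro P w hP
    rw [Nat.card_eq_one_iff_unique]
    constructor
    · constructor
      rintro ⟨v, hv⟩ ⟨v', hv'⟩
      apply Subtype.ext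
      show v = v'
      rw [(hP v).mp hv, (hP v').mp hv']
    · exact ⟨⟨w, (hP w).mpr rfl⟩⟩
  intro a
  induction a with
  | zero =>
    intro b
    rw [singl _ _ (key 0 b).1]
    simp [Nat.choose_self]
  | succ a iha =>
    intro b
    induction b with
    | zero =>
      rw [singl _ _ (key (a+1) 0).2]
      simp
    | succ b ihb =>
      have hbij : Function.Bijective
          (fun x : {t : List Bool // t.count true = a ∧ t.count false = b+1} ⊕
                   {t : List Bool // t.count true = a+1 ∧ t.count false = b} =>
            (match x with
              | Sum.inl t => ⟨true :: t.1, by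
                  obtain ⟨h1, h2⟩ := t.2
                  constructor <;> simp [List.count_cons, h1, h2]⟩
              | Sum.inr t => ⟨false :: t.1, by
                  obtain ⟨h1, h2⟩ := t.2
                  constructor <;> simp [List.count_cons, h1, h2]⟩ :
              {v : List Bool // v.count true = a+1 ∧ v.count false = b+1})) := by
        constructor
        · rintro (⟨t, ht⟩ | ⟨t, ht⟩) (⟨t', ht'⟩ | ⟨t', ht'⟩) hh <;>
            simp only [Subtype.mk.injEq, List.cons.injEq] at hh
          · simp only [Sum.inl.injEq, Subtype.mk.injEq]; exact hh.2
          · exact absurd hh.1 (by simp)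
          · exact absurd hh.1 (by simp)
          · simp only [Sum.inr.injEq, Subtype.mk.injEq]; exact hh.2
        · rintro ⟨v, hv1, hv2⟩
          have hne : v ≠ [] := by
            intro h; rw [h] at hv1; simp at hv1
          obtain ⟨x, t, rfl⟩ := List.exists_cons_of_ne_nil hne
          cases x
          · refine ⟨Sum.inr ⟨t, ?_, ?_⟩, rfl⟩
            · simpa [List.count_cons] using hv1
            · simp [List.count_cons] at hv2; omega
          · refine ⟨Sum.inl ⟨t, ?_, ?_⟩, rfl⟩
            · simp [List.count_cons] at hv1; omega
            · simpa [List.count_cons] using hv2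
      have hcard := Nat.card_eq_of_bijective _ hbij
      rw [Nat.card_sum, iha (b+1), ihb] at hcard
      have e1 : a + (b+1) = a + b + 1 := by omega
      have e2 : a + 1 + b = a + b + 1 := by omega
      rw [e1, e2] at hcard
      have hcc : (a+b+1+1).choose (b+1) = (a+b+1).choose b + (a+b+1).choose (b+1) := by
        simpa [Nat.succ_eq_add_one] using Nat.choose_succ_succ (a+b+1) b
      have e3 : a + 1 + (b + 1) = (a + b + 1) + 1 := by omega
      rw [e3, hcc]
      omega

lemma card_good_mul (n : ℕ) :
    Nat.card {v : List Bool // v.count true = 2*n+1 ∧ v.count false = n} =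
      Nat.card {g : List Bool // GoodT n g} * (3*n+1) := by
  have hbij : Function.Bijective
      (fun p : {g : List Bool // GoodT n g} × Fin (3*n+1) =>
        (⟨p.1.1.rotate p.2.1, by
          have hperm := List.rotate_perm p.1.1 p.2.1
          rw [hperm.count_eq, hperm.count_eq]
          exact ⟨p.1.2.1, p.1.2.2.1⟩⟩ :
          {v : List Bool // v.count true = 2*n+1 ∧ v.count false = n})) := by
    constructor
    · rintro ⟨⟨g, hg⟩, ⟨k, hk⟩⟩ ⟨⟨g', hg'⟩, ⟨k', hk'⟩⟩ hh
      simp only [Subtype.mk.injEq] at hh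
      have hLg : g.length = 3*n+1 := goodT_length ⟨hg.1, hg.2.1⟩
      have hLg' : g'.length = 3*n+1 := goodT_length ⟨hg'.1, hg'.2.1⟩
      have hrot : g.rotate (k + (3*n+1 - k')) = g' := by
        have h1 : (g.rotate k).rotate (3*n+1 - k') = (g'.rotate k').rotate (3*n+1 - k') := by
          rw [hh]
        rw [List.rotate_rotate, List.rotate_rotate] at h1
        rw [h1, show k' + (3*n+1 - k') = 3*n+1 by omega, ← hLg', List.rotate_length]
      set m := (k + (3*n+1 - k')) % (3*n+1) with hm
      have hrotm : g.rotate m = g' := by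
        rw [hm, ← hLg, List.rotate_mod, hLg, hrot]
      have hmlt : m < 3*n+1 := Nat.mod_lt _ (by omega)
      rcases Nat.eq_zero_or_pos m with hm0 | hmpos
      · have hgg' : g = g' := by rw [← hrotm, hm0, List.rotate_zero]
        have hkk' : k = k' := by
          have hmod : (k + (3*n+1 - k')) % (3*n+1) = 0 := hm.symm.trans hm0
          have hdvd := Nat.dvd_of_mod_eq_zero hmod
          rcases hdvd with ⟨c, hc⟩
          match c, hc with
          | 0, hc => omega
          | 1, hc => omega
          | (c+2), hc =>
            have hge : (3*n+1)*2 ≤ (3*n+1)*(c+2) := Nat.mul_le_mul_left _ (by omega)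
            omega
        subst hgg'; subst hkk'
        rfl
      · exfalso
        exact not_good_rotate hg hmpos (by omega) (hrotm ▸ hg')
    · rintro ⟨v, hv1, hv2⟩
      have hLv : v.length = 3*n+1 := goodT_length ⟨hv1, hv2⟩
      obtain ⟨j, hjL, hgood⟩ := exists_good_rotate v hv1 hv2
      have hLr : (v.rotate j).length = 3*n+1 := by rw [List.length_rotate, hLv]
      refine ⟨⟨⟨v.rotate j, hgood⟩, ⟨(v.length - j) % (3*n+1), Nat.mod_lt _ (by omega)⟩⟩, ?_⟩
      apply Subtype.ext
      simp only
      rw [← hLr, List.rotate_mod, List.rotate_rotate,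
        show j + (v.length - j) = v.length from by omega, List.rotate_length]
  have := Nat.card_eq_of_bijective _ hbij
  rw [Nat.card_prod, show Nat.card (Fin (3*n+1)) = 3*n+1 from by simp] at this
  omega

theorem smotzkin_count' (n : ℕ) :
    Nat.card {w : List Step // IsSMotzkin n w} = Nat.choose (3 * n) n / (2 * n + 1) := by
  have h1 := card_smotzkin_eq_ternary n
  have h2 := card_ternary_eq_good n
  have h3 := card_good_mul n
  have h4 := card_count_pair (2*n+1) n
  rw [h3] at h4
  set G := Nat.card {g : List Bool // GoodT n g} with hG
  have h5 : 2*n+1 + n = 3*n+1 := by omega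
  rw [h5] at h4
  have h6 : (3*n+1) * Nat.choose (3*n) n = Nat.choose (3*n+1) (n+1) * (n+1) := by
    simpa [Nat.succ_eq_add_one] using Nat.add_one_mul_choose_eq (3*n) n
  have h7 := Nat.choose_succ_right_eq (3*n+1) n
  have h8 : 3*n+1 - n = 2*n+1 := by omega
  rw [h8] at h7
  have h9 : (3*n+1) * Nat.choose (3*n) n = (3*n+1) * (G * (2*n+1)) := by
    rw [h6, h7, ← h4]; ring
  have h10 : Nat.choose (3*n) n = G * (2*n+1) :=
    Nat.eq_of_mul_eq_mul_left (by omega) h9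
  rw [h1, h2, h10, Nat.mul_div_cancel _ (by omega : 0 < 2*n+1)]

end SMAux


/-- S-Motzkin paths of length 3n are counted by (1/(2n+1))·C(3n,n). -/
theorem smotzkin_count (n : ℕ) :
    Nat.card {w : List Step // IsSMotzkin n w} = Nat.choose (3 * n) n / (2 * n + 1) :=
  SMAux.smotzkin_count' n
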